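/- Let p be a prime with p ≡ 3 (mod 8). Then the elliptic curve E^p: y² = x³ − p²x over ℚ has Mordell–Weil rank 0, and E^p(ℚ) = E^p(ℚ)[2] ≅ ℤ/2ℤ × ℤ/2ℤ, consisting of O, (0,0), (p,0), (−p,0). -/

import Mathlib

lemma nagell_sq8 (n : ℕ) : n ^ 2 % 8 = 0 ∨ n ^ 2 % 8 = 1 ∨ n ^ 2 % 8 = 4 := by
  rw [Nat.pow_mod]
  have h : n % 8 < 8 := Nat.mod_lt _ (by norm_num)
  interval_cases (n % 8) <;> simp

lemma nagell_sq_mod_two (n : ℕ) : n ^ 2 % 2 = n % 2 := by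
  rw [Nat.pow_mod]
  have h : n % 2 < 2 := Nat.mod_lt _ (by norm_num)
  interval_cases (n % 2) <;> simp

lemma nagell_pA8 (p α : ℕ) (hp3 : p % 8 = 3) :
    p * α ^ 2 % 8 = 0 ∨ p * α ^ 2 % 8 = 3 ∨ p * α ^ 2 % 8 = 4 := by
  rw [Nat.mul_mod, hp3]
  rcases nagell_sq8 α with h | h | h <;> rw [h] <;> norm_num

lemma nagell_nat_sq_of_coprime {a b c : ℕ} (h : Nat.Coprime a b) (heq : a * b = c ^ 2) :
    ∃ a', a = a' ^ 2 := by
  have h' : IsCoprime (a : ℤ) (b : ℤ) := Int.isCoprime_iff_gcd_eq_one.mpr (by simpa using h)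
  have heq' : (a : ℤ) * b = (c : ℤ) ^ 2 := by exact_mod_cast heq
  rcases Int.sq_of_isCoprime h' heq' with ⟨a0, ha | ha⟩
  · exact ⟨a0.natAbs, by exact_mod_cast ha.trans (Int.natAbs_sq a0).symm⟩
  · refine ⟨0, ?_⟩
    have h1 : (0:ℤ) ≤ a0 ^ 2 := sq_nonneg _
    have h2 : (0:ℤ) ≤ (a:ℤ) := Int.natCast_nonneg a
    have h3 : (a:ℤ) = 0 := by omega
    have : a = 0 := by exact_mod_cast h3
    simp [this]

lemma nagell_both_sq {a b c : ℕ} (h : Nat.Coprime a b) (heq : a * b = c ^ 2) :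
    (∃ a', a = a' ^ 2) ∧ (∃ b', b = b' ^ 2) :=
  ⟨nagell_nat_sq_of_coprime h heq,
   nagell_nat_sq_of_coprime h.symm (by rwa [mul_comm])⟩

/-- if `x*y*(z*w) = p*q²` with pairwise coprime factors and `p ∣ x`, then
`x = p·α²` and the others are squares. -/
lemma nagell_four_sq {p q x y z w : ℕ} (hp : p.Prime)
    (hxy : Nat.Coprime x y) (hxz : Nat.Coprime x z) (hxw : Nat.Coprime x w)
    (hyz : Nat.Coprime y z) (hyw : Nat.Coprime y w) (hzw : Nat.Coprime z w)
    (h : x * y * (z * w) = p * q ^ 2) (hpx : p ∣ x) :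
    ∃ α β γ δ, x = p * α ^ 2 ∧ y = β ^ 2 ∧ z = γ ^ 2 ∧ w = δ ^ 2 := by
  obtain ⟨x', rfl⟩ := hpx
  have h2 : p * (x' * (y * (z * w))) = p * q ^ 2 := by rw [← h]; ring
  have h3 : x' * (y * (z * w)) = q ^ 2 := Nat.eq_of_mul_eq_mul_left hp.pos h2
  have hd : x' ∣ p * x' := ⟨p, mul_comm _ _⟩
  have cx'y : Nat.Coprime x' y := Nat.Coprime.coprime_dvd_left hd hxy
  have cx'z : Nat.Coprime x' z := Nat.Coprime.coprime_dvd_left hd hxz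
  have cx'w : Nat.Coprime x' w := Nat.Coprime.coprime_dvd_left hd hxw
  obtain ⟨⟨α, hα⟩, rest⟩ := nagell_both_sq (cx'y.mul_right (cx'z.mul_right cx'w)) h3
  obtain ⟨r, hr⟩ := rest
  obtain ⟨⟨β, hβ⟩, rest2⟩ := nagell_both_sq (hyz.mul_right hyw) hr
  obtain ⟨s, hs⟩ := rest2
  obtain ⟨⟨γ, hγ⟩, ⟨δ, hδ⟩⟩ := nagell_both_sq hzw hs
  exact ⟨α, β, γ, δ, by rw [hα], hβ, hγ, hδ⟩

lemma nagell_core (p : ℕ) (hp : p.Prime) (hp3 : p % 8 = 3) (c M N q : ℕ)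
    (ih : ∀ c', c' < c → ∀ a b q', 0 < a → 0 < b → 0 < q' →
      a ^ 2 + b ^ 2 = c' ^ 2 → a * b = 2 * p * q' ^ 2 → False)
    (hN : 0 < N) (hNM : N < M) (hco : Nat.Coprime M N) (hpar : M % 2 + N % 2 = 1)
    (hc : c = M ^ 2 + N ^ 2) (hq : 0 < q)
    (hprod : M * N * ((M - N) * (M + N)) = p * q ^ 2) : False := by
  obtain ⟨K, hK⟩ : ∃ K, M = N + K := ⟨M - N, by omega⟩
  obtain ⟨S, hS⟩ : ∃ S, S = M + N := ⟨M + N, rfl⟩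
  rw [show M - N = K by omega, ← hS] at hprod
  have hKpos : 0 < K := by omega
  have hSpos : 0 < S := by omega
  have hKodd : K % 2 = 1 := by omega
  have hSodd : S % 2 = 1 := by omega
  -- pairwise coprimality
  have cMN : Nat.Coprime M N := hco
  have cMK : Nat.Coprime M K := by
    have h1 : Nat.gcd M K ∣ N := by
      have := Nat.dvd_sub (Nat.gcd_dvd_left M K) (Nat.gcd_dvd_right M K)
      rwa [show M - K = N by omega] at this
    exact Nat.dvd_one.mp ((Nat.dvd_gcd (Nat.gcd_dvd_left M K) h1).trans hco.dvd)
  have cNK : Nat.Coprime N K := by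
    have h1 : Nat.gcd N K ∣ M := by
      have := Nat.dvd_add (Nat.gcd_dvd_left N K) (Nat.gcd_dvd_right N K)
      rwa [← hK] at this
    exact Nat.dvd_one.mp ((Nat.dvd_gcd h1 (Nat.gcd_dvd_left N K)).trans hco.dvd)
  have cMS : Nat.Coprime M S := by
    have h1 : Nat.gcd M S ∣ N := by
      have := Nat.dvd_sub (Nat.gcd_dvd_right M S) (Nat.gcd_dvd_left M S)
      rwa [show S - M = N by omega] at this
    exact Nat.dvd_one.mp ((Nat.dvd_gcd (Nat.gcd_dvd_left M S) h1).trans hco.dvd)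
  have cNS : Nat.Coprime N S := by
    have h1 : Nat.gcd N S ∣ M := by
      have := Nat.dvd_sub (Nat.gcd_dvd_right N S) (Nat.gcd_dvd_left N S)
      rwa [show S - N = M by omega] at this
    exact Nat.dvd_one.mp ((Nat.dvd_gcd h1 (Nat.gcd_dvd_left N S)).trans hco.dvd)
  have cKS : Nat.Coprime K S := by
    have h2N : Nat.gcd K S ∣ 2 * N := by
      have := Nat.dvd_sub (Nat.gcd_dvd_right K S) (Nat.gcd_dvd_left K S)
      rwa [show S - K = 2 * N by omega] at this
    have h2M : Nat.gcd K S ∣ 2 * M := by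
      have := Nat.dvd_add (Nat.gcd_dvd_left K S) (Nat.gcd_dvd_right K S)
      rwa [show K + S = 2 * M by omega] at this
    have h2 : Nat.gcd K S ∣ 2 := by
      have := Nat.dvd_gcd h2M h2N
      rwa [Nat.gcd_mul_left, hco.gcd_eq_one, mul_one] at this
    obtain ⟨k, hk⟩ := Nat.gcd_dvd_left K S
    rcases (Nat.dvd_prime Nat.prime_two).mp h2 with h | h
    · exact h
    · rw [h] at hk; omega
  -- which factor does p divide?
  have hpd : p ∣ M * N * (K * S) := hprod ▸ ⟨q ^ 2, rfl⟩
  rcases (Nat.Prime.dvd_mul hp).mp hpd with hpd' | hpd'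
  · rcases (Nat.Prime.dvd_mul hp).mp hpd' with hpM | hpN
    · -- Case A : p ∣ M, contradiction mod 8
      obtain ⟨α, β, γ, δ, eM, eN, eK, eS⟩ :=
        nagell_four_sq hp cMN cMK cMS cNK cNS cKS hprod hpM
      have hK8 : K % 8 = 0 ∨ K % 8 = 1 ∨ K % 8 = 4 := by
        have := nagell_sq8 γ; rwa [← eK] at this
      have hS8 : S % 8 = 0 ∨ S % 8 = 1 ∨ S % 8 = 4 := by
        have := nagell_sq8 δ; rwa [← eS] at this
      have hA := nagell_pA8 p α hp3
      have key : K + S = 2 * (p * α ^ 2) := by rw [← eM]; omega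
      generalize p * α ^ 2 = A at key hA
      omega
    · -- Case B : p ∣ N, descent
      obtain ⟨α, β, γ, δ, eN, eM, eK, eS⟩ :=
        nagell_four_sq hp cMN.symm cNK cNS cMK cMS cKS
          (by rw [← hprod]; ring) hpN
      have hγodd : γ % 2 = 1 := by
        have := nagell_sq_mod_two γ; rw [← eK] at this; omega
      have hδodd : δ % 2 = 1 := by
        have := nagell_sq_mod_two δ; rw [← eS] at this; omega
      have h1 : δ ^ 2 = γ ^ 2 + 2 * N := by rw [← eS, ← eK]; omega
      have hδγ : γ < δ := by
        by_contra hle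
        have h2 : δ ^ 2 ≤ γ ^ 2 := Nat.pow_le_pow_left (by omega) 2
        linarith
      obtain ⟨t, ht, htpos⟩ : ∃ t, δ = γ + 2 * t ∧ 0 < t := ⟨(δ - γ) / 2, by omega⟩
      have h2 : (γ + 2 * t) ^ 2 = γ ^ 2 + (4 * (γ * t) + 4 * t ^ 2) := by ring
      rw [ht, h2] at h1
      have hN2 : N = 2 * (γ * t) + 2 * t ^ 2 := by linarith
      have hp2 : p % 2 = 1 := by omega
      have hαeven : α % 2 = 0 := by
        rcases Nat.mod_two_eq_zero_or_one α with h | h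
        · exact h
        · exfalso
          have hodd : N % 2 = 1 := by
            rw [eN, Nat.mul_mod, Nat.pow_mod, h, hp2]
          omega
      obtain ⟨α', hα'⟩ : ∃ α', α = 2 * α' := ⟨α / 2, by omega⟩
      have hα'pos : 0 < α' := by
        rcases Nat.eq_zero_or_pos α' with h | h
        · exfalso; rw [h, mul_zero] at hα'; rw [hα'] at eN; simp at eN; omega
        · exact h
      have hst : (γ + t) * t = 2 * p * α' ^ 2 := by
        have e2 : p * α ^ 2 = 4 * (p * α' ^ 2) := by rw [hα']; ring
        have e3 : (γ + t) * t = γ * t + t ^ 2 := by ring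
        rw [e3]
        linarith [eN, hN2, e2]
      have hs2 : (γ + t) ^ 2 + t ^ 2 = β ^ 2 := by
        have e4 : (γ + t) ^ 2 + t ^ 2 = γ ^ 2 + (2 * (γ * t) + 2 * t ^ 2) := by ring
        rw [e4, ← hN2, ← eK, ← eM]; omega
      have hβpos : 0 < β := by
        rcases Nat.eq_zero_or_pos β with h | h
        · exfalso; rw [h] at eM; simp at eM; omega
        · exact h
      have hβc : β < c := by
        have hbm : β ≤ β ^ 2 := Nat.le_self_pow two_ne_zero β
        have hmm : M ≤ M ^ 2 := Nat.le_self_pow two_ne_zero M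
        have hnn : 0 < N ^ 2 := pow_pos hN 2
        have : M = β ^ 2 := eM
        linarith
      exact ih β hβc (γ + t) t α' (by omega) htpos hα'pos hs2 hst
  · rcases (Nat.Prime.dvd_mul hp).mp hpd' with hpK | hpS
    · -- Case D : p ∣ K = M - N, quadratic residue contradiction
      obtain ⟨α, β, γ, δ, eK, eM, eN, eS⟩ :=
        nagell_four_sq hp cMK.symm cNK.symm cKS cMN cMS cNS
          (by rw [← hprod]; ring) hpK
      haveI : Fact p.Prime := ⟨hp⟩
      have hpγ : ¬ p ∣ γ := by
        intro hd
        have h1 : p ∣ N := by rw [eN]; exact dvd_pow hd two_ne_zero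
        have h2 : p ∣ M := by rw [hK]; exact dvd_add h1 ⟨α ^ 2, eK⟩
        have h3 : p ∣ 1 := hco.gcd_eq_one ▸ Nat.dvd_gcd h2 h1
        exact Nat.Prime.one_lt hp |>.ne' (Nat.dvd_one.mp h3)
      have heq2 : δ ^ 2 = 2 * γ ^ 2 + p * α ^ 2 := by rw [← eS, ← eN, ← eK]; omega
      have hz : ((δ : ZMod p)) ^ 2 = 2 * (γ : ZMod p) ^ 2 := by
        have h5 := congrArg (fun t : ℕ => (t : ZMod p)) heq2
        push_cast at h5
        simpa [ZMod.natCast_self] using h5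
      have hγ0 : (γ : ZMod p) ≠ 0 := by
        rw [Ne, ZMod.natCast_eq_zero_iff]
        exact hpγ
      have hsq : IsSquare (2 : ZMod p) := by
        refine ⟨δ * (γ : ZMod p)⁻¹, ?_⟩
        field_simp
        linear_combination -hz
      have := (ZMod.exists_sq_eq_two_iff (by omega : p ≠ 2)).mp hsq
      omega
    · -- Case C : p ∣ S = M + N, contradiction mod 8
      obtain ⟨α, β, γ, δ, eS, eM, eN, eK⟩ :=
        nagell_four_sq hp cMS.symm cNS.symm cKS.symm cMN cMK cNK
          (by rw [← hprod]; ring) hpS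
      have hM8 : M % 8 = 0 ∨ M % 8 = 1 ∨ M % 8 = 4 := by
        have := nagell_sq8 β; rwa [← eM] at this
      have hN8 : N % 8 = 0 ∨ N % 8 = 1 ∨ N % 8 = 4 := by
        have := nagell_sq8 γ; rwa [← eN] at this
      have hA := nagell_pA8 p α hp3
      have key : M + N = p * α ^ 2 := by rw [← eS]; omega
      generalize p * α ^ 2 = A at key hA
      omega

lemma nagell_branch (p : ℕ) (hp : p.Prime) (hp3 : p % 8 = 3) (c a b q : ℕ)
    (ih : ∀ c', c' < c → ∀ a b q', 0 < a → 0 < b → 0 < q' →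
      a ^ 2 + b ^ 2 = c' ^ 2 → a * b = 2 * p * q' ^ 2 → False)
    (ha : 0 < a) (hb : 0 < b) (hq : 0 < q) (har : a * b = 2 * p * q ^ 2)
    (m n : ℤ) (hm : (a : ℤ) = m ^ 2 - n ^ 2) (hn : (b : ℤ) = 2 * m * n)
    (hco : Int.gcd m n = 1)
    (hpar : m % 2 = 0 ∧ n % 2 = 1 ∨ m % 2 = 1 ∧ n % 2 = 0)
    (hz : (c : ℤ) = m ^ 2 + n ^ 2 ∨ (c : ℤ) = -(m ^ 2 + n ^ 2)) : False := by
  set M := m.natAbs with hM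
  set N := n.natAbs with hN
  have hMsq : ((M : ℤ)) ^ 2 = m ^ 2 := Int.natAbs_sq m
  have hNsq : ((N : ℤ)) ^ 2 = n ^ 2 := Int.natAbs_sq n
  -- positivity of m*n
  have hmn0 : 0 < m * n := by
    have hb' : (0 : ℤ) < 2 * m * n := by rw [← hn]; exact_mod_cast hb
    linarith
  have hmncast : m * n = ((M * N : ℕ) : ℤ) := by
    rw [← Int.natAbs_of_nonneg hmn0.le, Int.natAbs_mul]
  have hNpos : 0 < N := by
    rcases Nat.eq_zero_or_pos N with h | h
    · exfalso
      have : n = 0 := Int.natAbs_eq_zero.mp h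
      rw [this, mul_zero] at hmn0; exact lt_irrefl _ hmn0
    · exact h
  have hNM : N < M := by
    have ha' : (0 : ℤ) < m ^ 2 - n ^ 2 := by rw [← hm]; exact_mod_cast ha
    have h2 : ((N : ℤ)) ^ 2 < ((M : ℤ)) ^ 2 := by rw [hMsq, hNsq]; linarith
    have h3 : N ^ 2 < M ^ 2 := by exact_mod_cast h2
    exact lt_of_pow_lt_pow_left₀ 2 (Nat.zero_le M) h3
  have hcoN : Nat.Coprime M N := hco
  have hparN : M % 2 + N % 2 = 1 := by
    rcases hpar with ⟨h1, h2⟩ | ⟨h1, h2⟩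
    · have e1 : Even M := Int.natAbs_even.mpr (Int.even_iff.mpr h1)
      have e2 : Odd N := Int.natAbs_odd.mpr (Int.odd_iff.mpr h2)
      rw [Nat.even_iff] at e1; rw [Nat.odd_iff] at e2; omega
    · have e1 : Odd M := Int.natAbs_odd.mpr (Int.odd_iff.mpr h1)
      have e2 : Even N := Int.natAbs_even.mpr (Int.even_iff.mpr h2)
      rw [Nat.odd_iff] at e1; rw [Nat.even_iff] at e2; omega
  have hcN : c = M ^ 2 + N ^ 2 := by
    rcases hz with h | h
    · have : (c : ℤ) = ((M ^ 2 + N ^ 2 : ℕ) : ℤ) := by push_cast; rw [hMsq, hNsq]; exact h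
      exact_mod_cast this
    · exfalso
      have hm0 : m ≠ 0 := by rintro rfl; rw [zero_mul] at hmn0; exact lt_irrefl _ hmn0
      have h1 : (0 : ℤ) < m ^ 2 := by positivity
      have h2 : (0 : ℤ) ≤ n ^ 2 := sq_nonneg n
      have h3 : (0 : ℤ) ≤ (c : ℤ) := Int.natCast_nonneg c
      omega
  -- the product equation
  have hint : ((M * N * ((M - N) * (M + N)) : ℕ) : ℤ) = ((p * q ^ 2 : ℕ) : ℤ) := by
    push_cast [Nat.cast_sub hNM.le]
    have harZ : (m ^ 2 - n ^ 2) * (2 * m * n) = 2 * p * q ^ 2 := by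
      rw [← hm, ← hn]; exact_mod_cast har
    have h2 : (2 : ℤ) * ((m * n) * (m ^ 2 - n ^ 2)) = 2 * ((p : ℤ) * q ^ 2) := by
      linear_combination harZ
    have h3 : (m * n) * (m ^ 2 - n ^ 2) = (p : ℤ) * q ^ 2 :=
      mul_left_cancel₀ two_ne_zero h2
    rw [hmncast] at h3
    push_cast at h3
    linear_combination h3 + ((M:ℤ) * N) * hMsq - ((M:ℤ) * N) * hNsq
  have hprodN : M * N * ((M - N) * (M + N)) = p * q ^ 2 := by exact_mod_cast hint
  exact nagell_core p hp hp3 c M N q ih hNpos hNM hcoN hparN hcN hq hprodN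

/-- Nagell's descent: a prime `p ≡ 3 (mod 8)` is not a congruent number. -/
lemma nagell_descent (p : ℕ) (hp : p.Prime) (hp3 : p % 8 = 3) :
    ∀ c a b q : ℕ, 0 < a → 0 < b → 0 < q →
      a ^ 2 + b ^ 2 = c ^ 2 → a * b = 2 * p * q ^ 2 → False := by
  intro c
  induction c using Nat.strong_induction_on with
  | _ c ih =>
    intro a b q ha hb hq hpy har
    by_cases hg : Nat.gcd a b = 1
    · -- coprime case : use the classification of Pythagorean triples
      have hPT : PythagoreanTriple (a : ℤ) (b : ℤ) (c : ℤ) := by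
        have h1 : a * a + b * b = c * c := by
          have := hpy; rw [pow_two, pow_two, pow_two] at this; exact this
        show (a:ℤ) * a + b * b = c * c
        exact_mod_cast h1
      have hgcd : Int.gcd (a : ℤ) (b : ℤ) = 1 := by
        rw [Int.gcd_natCast_natCast]; exact hg
      obtain ⟨m, n, hmn, hz, hco, hpar⟩ :=
        PythagoreanTriple.coprime_classification.mp ⟨hPT, hgcd⟩
      rcases hmn with ⟨hm, hn⟩ | ⟨hm, hn⟩
      · exact nagell_branch p hp hp3 c a b q ih ha hb hq har m n hm hn hco hpar hz
      · exact nagell_branch p hp hp3 c b a q ih hb ha hq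
          (by rw [mul_comm]; exact har) m n hn hm hco hpar hz
    · -- non-coprime case : divide out a common prime factor
      obtain ⟨ℓ, hℓp, hℓg⟩ := Nat.exists_prime_and_dvd hg
      have hℓa : ℓ ∣ a := hℓg.trans (Nat.gcd_dvd_left _ _)
      have hℓb : ℓ ∣ b := hℓg.trans (Nat.gcd_dvd_right _ _)
      have hℓ2 : 2 ≤ ℓ := hℓp.two_le
      have hℓq : ℓ ∣ q := by
        by_contra hnq
        have hcop : Nat.Coprime ℓ q := (Nat.Prime.coprime_iff_not_dvd hℓp).mpr hnq
        have h2 : ℓ ^ 2 ∣ 2 * p * q ^ 2 := by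
          rw [← har]
          obtain ⟨a₁, rfl⟩ := hℓa
          obtain ⟨b₁, rfl⟩ := hℓb
          exact ⟨a₁ * b₁, by ring⟩
        have h3 : ℓ ^ 2 ∣ 2 * p :=
          (Nat.Coprime.pow 2 2 hcop).dvd_of_dvd_mul_right h2
        have hℓ2p : ℓ ∣ 2 * p := (dvd_pow_self ℓ two_ne_zero).trans h3
        rcases (Nat.Prime.dvd_mul hℓp).mp hℓ2p with h | h
        · have hℓeq : ℓ = 2 := (Nat.prime_dvd_prime_iff_eq hℓp Nat.prime_two).mp h
          rw [hℓeq] at h3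
          obtain ⟨k, hk⟩ := h3
          omega
        · have hℓeq : ℓ = p := (Nat.prime_dvd_prime_iff_eq hℓp hp).mp h
          rw [hℓeq] at h3
          obtain ⟨k, hk⟩ := h3
          have hpk : p * 2 = p * (p * k) := by rw [pow_two] at hk; linarith
          have h4 : 2 = p * k := Nat.eq_of_mul_eq_mul_left hp.pos hpk
          have h5 : p ≤ 2 := Nat.le_of_dvd (by norm_num) ⟨k, h4⟩
          omega
      have hℓc : ℓ ∣ c := by
        have h1 : ℓ ∣ c ^ 2 := by
          rw [← hpy]
          exact dvd_add (dvd_pow hℓa two_ne_zero) (dvd_pow hℓb two_ne_zero)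
        exact hℓp.dvd_of_dvd_pow h1
      obtain ⟨a₁, rfl⟩ := hℓa
      obtain ⟨b₁, rfl⟩ := hℓb
      obtain ⟨q₁, rfl⟩ := hℓq
      obtain ⟨c₁, rfl⟩ := hℓc
      have hℓpos : 0 < ℓ := by omega
      have ha₁ : 0 < a₁ := by
        rcases Nat.eq_zero_or_pos a₁ with h | h
        · rw [h, mul_zero] at ha; exact absurd ha (lt_irrefl 0)
        · exact h
      have hb₁ : 0 < b₁ := by
        rcases Nat.eq_zero_or_pos b₁ with h | h
        · rw [h, mul_zero] at hb; exact absurd hb (lt_irrefl 0)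
        · exact h
      have hq₁ : 0 < q₁ := by
        rcases Nat.eq_zero_or_pos q₁ with h | h
        · rw [h, mul_zero] at hq; exact absurd hq (lt_irrefl 0)
        · exact h
      have hc₁ : 0 < c₁ := by
        rcases Nat.eq_zero_or_pos c₁ with h | h
        · exfalso
          rw [h, mul_zero] at hpy
          have h1 : 0 < a₁ ^ 2 := pow_pos ha₁ 2
          have h2 : 0 < (ℓ * a₁) ^ 2 := pow_pos (by positivity) 2
          simp at hpy
          omega
        · exact h
      have hlt : c₁ < ℓ * c₁ := by
        calc c₁ = 1 * c₁ := (one_mul c₁).symm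
        _ < ℓ * c₁ := (Nat.mul_lt_mul_right hc₁).mpr (by omega)
      have e1 : a₁ ^ 2 + b₁ ^ 2 = c₁ ^ 2 := by
        have h1 : ℓ ^ 2 * (a₁ ^ 2 + b₁ ^ 2) = ℓ ^ 2 * c₁ ^ 2 := by
          rw [mul_pow, mul_pow, mul_pow] at hpy
          rw [mul_add]
          exact_mod_cast hpy
        exact Nat.eq_of_mul_eq_mul_left (pow_pos hℓpos 2) h1
      have e2 : a₁ * b₁ = 2 * p * q₁ ^ 2 := by
        have h1 : ℓ ^ 2 * (a₁ * b₁) = ℓ ^ 2 * (2 * p * q₁ ^ 2) := by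
          rw [mul_pow] at har
          calc ℓ ^ 2 * (a₁ * b₁) = ℓ * a₁ * (ℓ * b₁) := by ring
          _ = 2 * p * (ℓ ^ 2 * q₁ ^ 2) := by rw [har]
          _ = ℓ ^ 2 * (2 * p * q₁ ^ 2) := by ring
        exact Nat.eq_of_mul_eq_mul_left (pow_pos hℓpos 2) h1
      exact ih c₁ hlt a₁ b₁ q₁ ha₁ hb₁ hq₁ e1 e2

lemma nagell_no_rat_point (p : ℕ) (hp : p.Prime) (hp3 : p % 8 = 3) (x y : ℚ)
    (hy : y ≠ 0) (heq : y ^ 2 = x ^ 3 - (p : ℚ) ^ 2 * x) : False := by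
  have hpQ : (p : ℚ) ≠ 0 := Nat.cast_ne_zero.mpr hp.ne_zero
  obtain ⟨r₁, hr₁def⟩ : ∃ r : ℚ, r = (x ^ 2 - (p : ℚ) ^ 2) / y := ⟨_, rfl⟩
  obtain ⟨r₂, hr₂def⟩ : ∃ r : ℚ, r = 2 * (p : ℚ) * x / y := ⟨_, rfl⟩
  obtain ⟨r₃, hr₃def⟩ : ∃ r : ℚ, r = (x ^ 2 + (p : ℚ) ^ 2) / y := ⟨_, rfl⟩
  have hr12 : r₁ * r₂ = 2 * (p : ℚ) := by
    rw [hr₁def, hr₂def]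
    field_simp
    linear_combination (-1 : ℚ) * heq
  have hpyth : r₁ ^ 2 + r₂ ^ 2 = r₃ ^ 2 := by
    rw [hr₁def, hr₂def, hr₃def]
    field_simp
    ring
  have hr₁0 : r₁ ≠ 0 := by
    intro h
    rw [h, zero_mul] at hr12
    exact (by positivity : (0:ℚ) < 2 * (p:ℚ)).ne hr12
  have hr₂0 : r₂ ≠ 0 := by
    intro h
    rw [h, mul_zero] at hr12
    exact (by positivity : (0:ℚ) < 2 * (p:ℚ)).ne hr12
  -- clear denominators
  have hden : ∀ r : ℚ, (r : ℚ) * (r.den : ℚ) = (r.num : ℚ) := by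
    intro r
    exact_mod_cast Rat.mul_den_eq_num r
  set D0 : ℕ := r₁.den * r₂.den * r₃.den with hD0def
  have hD0 : 0 < D0 := by rw [hD0def]; exact Nat.mul_pos (Nat.mul_pos r₁.pos r₂.pos) r₃.pos
  have hD0Q : ((D0 : ℚ)) ≠ 0 := Nat.cast_ne_zero.mpr hD0.ne'
  set A : ℤ := r₁.num * (r₂.den * r₃.den) with hAdef
  set B : ℤ := r₂.num * (r₁.den * r₃.den) with hBdef
  set C : ℤ := r₃.num * (r₁.den * r₂.den) with hCdef
  have hA : (A : ℚ) = r₁ * D0 := by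
    rw [hAdef, hD0def]
    push_cast
    rw [show r₁ * ((r₁.den : ℚ) * r₂.den * r₃.den) = r₁ * r₁.den * (r₂.den * r₃.den) by ring,
      hden r₁]
  have hB : (B : ℚ) = r₂ * D0 := by
    rw [hBdef, hD0def]
    push_cast
    rw [show r₂ * ((r₁.den : ℚ) * r₂.den * r₃.den) = r₂ * r₂.den * (r₁.den * r₃.den) by ring,
      hden r₂]
  have hC : (C : ℚ) = r₃ * D0 := by
    rw [hCdef, hD0def]
    push_cast
    rw [show r₃ * ((r₁.den : ℚ) * r₂.den * r₃.den) = r₃ * r₃.den * (r₁.den * r₂.den) by ring,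
      hden r₃]
  have hABQ : (A : ℚ) * B = 2 * (p : ℚ) * (D0 : ℚ) ^ 2 := by
    rw [hA, hB]
    linear_combination ((D0 : ℚ) ^ 2) * hr12
  have hPyQ : (A : ℚ) ^ 2 + (B : ℚ) ^ 2 = (C : ℚ) ^ 2 := by
    rw [hA, hB, hC]
    linear_combination ((D0 : ℚ) ^ 2) * hpyth
  have hABZ : A * B = ((2 * p * D0 ^ 2 : ℕ) : ℤ) := by exact_mod_cast hABQ
  have hPyZ : A ^ 2 + B ^ 2 = C ^ 2 := by exact_mod_cast hPyQ
  have hA0 : A ≠ 0 := by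
    intro h
    rw [h] at hA
    exact mul_ne_zero hr₁0 hD0Q (by exact_mod_cast hA.symm)
  have hB0 : B ≠ 0 := by
    intro h
    rw [h] at hB
    exact mul_ne_zero hr₂0 hD0Q (by exact_mod_cast hB.symm)
  have hnat1 : A.natAbs ^ 2 + B.natAbs ^ 2 = C.natAbs ^ 2 := by
    have h : ((A.natAbs : ℤ)) ^ 2 + ((B.natAbs : ℤ)) ^ 2 = ((C.natAbs : ℤ)) ^ 2 := by
      rw [Int.natAbs_sq, Int.natAbs_sq, Int.natAbs_sq]; exact hPyZ
    exact_mod_cast h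
  have hnat2 : A.natAbs * B.natAbs = 2 * p * D0 ^ 2 := by
    have h := congrArg Int.natAbs hABZ
    rwa [Int.natAbs_mul, Int.natAbs_natCast] at h
  exact nagell_descent p hp hp3 C.natAbs A.natAbs B.natAbs D0
    (Int.natAbs_pos.mpr hA0) (Int.natAbs_pos.mpr hB0) hD0 hnat1 hnat2

/-- Nagell: for a prime `p ≡ 3 (mod 8)`, the congruent number elliptic curve
`E^p : y² = x³ − p²x` has rank `0` over `ℚ` and
`E^p(ℚ) = E^p(ℚ)[2] ≅ ℤ/2 × ℤ/2 = {O, (0,0), (p,0), (−p,0)}`. -/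
theorem stmt_16 (p : ℕ) (hp : p.Prime) (hp3 : p % 8 = 3)
    (h₁ : (⟨0, 0, 0, -(p : ℚ) ^ 2, 0⟩ :
      WeierstrassCurve ℚ).toAffine.Nonsingular 0 0)
    (h₂ : (⟨0, 0, 0, -(p : ℚ) ^ 2, 0⟩ :
      WeierstrassCurve ℚ).toAffine.Nonsingular (p : ℚ) 0)
    (h₃ : (⟨0, 0, 0, -(p : ℚ) ^ 2, 0⟩ :
      WeierstrassCurve ℚ).toAffine.Nonsingular (-(p : ℚ)) 0) :
    (∀ Q : (⟨0, 0, 0, -(p : ℚ) ^ 2, 0⟩ : WeierstrassCurve ℚ).toAffine.Point,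
      Q = 0 ∨ Q = .some _ _ h₁ ∨ Q = .some _ _ h₂ ∨ Q = .some _ _ h₃) ∧
    (∀ Q : (⟨0, 0, 0, -(p : ℚ) ^ 2, 0⟩ : WeierstrassCurve ℚ).toAffine.Point,
      Q + Q = 0) := by
  have hpQ : (p : ℚ) ≠ 0 := Nat.cast_ne_zero.mpr hp.ne_zero
  have hclass : ∀ Q : (⟨0, 0, 0, -(p : ℚ) ^ 2, 0⟩ :
      WeierstrassCurve ℚ).toAffine.Point,
      Q = 0 ∨ Q = .some _ _ h₁ ∨ Q = .some _ _ h₂ ∨ Q = .some _ _ h₃ := by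
    intro Q
    cases Q with
    | zero => exact Or.inl rfl
    | @some x y h =>
      have hE := h.1
      rw [WeierstrassCurve.Affine.equation_iff] at hE
      simp only [zero_mul, mul_zero, add_zero, zero_add] at hE
      -- hE : y ^ 2 = x ^ 3 + -(p:ℚ)^2 * x
      have heq : y ^ 2 = x ^ 3 - (p : ℚ) ^ 2 * x := by linear_combination hE
      by_cases hy : y = 0
      · subst hy
        have hx : x * ((x - p) * (x + p)) = 0 := by linear_combination -heq
        rcases mul_eq_zero.mp hx with hx0 | hx1
        · subst hx0
          exact Or.inr (Or.inl rfl)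
        · rcases mul_eq_zero.mp hx1 with hx2 | hx3
          · have : x = (p : ℚ) := by linear_combination hx2
            subst this
            exact Or.inr (Or.inr (Or.inl rfl))
          · have : x = -(p : ℚ) := by linear_combination hx3
            subst this
            exact Or.inr (Or.inr (Or.inr rfl))
      · exact absurd heq (fun heq => nagell_no_rat_point p hp hp3 x y hy heq)
  refine ⟨hclass, ?_⟩
  have hneg : ∀ (x y : ℚ)
      (h : (⟨0, 0, 0, -(p : ℚ) ^ 2, 0⟩ :
        WeierstrassCurve ℚ).toAffine.Nonsingular x y), y = 0 →
      WeierstrassCurve.Affine.Point.some _ _ h +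
        WeierstrassCurve.Affine.Point.some _ _ h = 0 := by
    intro x y h hy
    apply WeierstrassCurve.Affine.Point.add_self_of_Y_eq
    rw [WeierstrassCurve.Affine.negY]
    simp [hy]
  intro Q
  rcases hclass Q with rfl | rfl | rfl | rfl
  · rfl
  · exact hneg _ _ h₁ rfl
  · exact hneg _ _ h₂ rfl
  · exact hneg _ _ h₃ rfl
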